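/- arXiv:0801.2748 — 3 statements merged into one kernel-verified Lean document; each statement's English description precedes it below -/
import Mathlib

section
/- Let A be a real symmetric positive definite n×n matrix, B a real symmetric positive definite m×m matrix, and C a real n×m matrix such that the block matrix Σ = [[A, C],[Cᵀ, B]] is positive semidefinite. If Σ is singular (not invertible), then ρ(A,B,C) = 1. -/
open Matrix

/-- The canonical correlation value ρ(A,B,C):
the supremum over nonzero a and nonzero b of (aᵀ C b)/(√(aᵀ A a)·√(bᵀ B b)). -/
noncomputable def rho {ι κ : Type*} [Fintype ι] [Fintype κ]
    (A : Matrix ι ι ℝ) (B : Matrix κ κ ℝ) (C : Matrix ι κ ℝ) : ℝ :=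
  sSup {r : ℝ | ∃ (a : ι → ℝ) (b : κ → ℝ), a ≠ 0 ∧ b ≠ 0 ∧
    r = (a ⬝ᵥ C.mulVec b) / (Real.sqrt (a ⬝ᵥ A.mulVec a) * Real.sqrt (b ⬝ᵥ B.mulVec b))}

lemma quad_form_blocks {n m : ℕ} (A : Matrix (Fin n) (Fin n) ℝ) (B : Matrix (Fin m) (Fin m) ℝ)
    (C : Matrix (Fin n) (Fin m) ℝ) (x : Fin n → ℝ) (y : Fin m → ℝ) :
    (Sum.elim x y) ⬝ᵥ (Matrix.fromBlocks A C Cᵀ B).mulVec (Sum.elim x y)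
      = x ⬝ᵥ A.mulVec x + 2 * (x ⬝ᵥ C.mulVec y) + y ⬝ᵥ B.mulVec y := by
  rw [fromBlocks_mulVec]
  simp only [Sum.elim_comp_inl, Sum.elim_comp_inr, sumElim_dotProduct_sumElim,
    dotProduct_add]
  have : y ⬝ᵥ Cᵀ.mulVec x = x ⬝ᵥ C.mulVec y := by
    rw [mulVec_transpose, dotProduct_comm, ← dotProduct_mulVec]
  rw [this]; ring

/-- if the positive semidefinite block matrix Σ = [[A,C],[Cᵀ,B]]
(with A, B symmetric positive definite) is singular, then ρ(A,B,C) = 1. -/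
theorem stmt_8 (n m : ℕ) (hn : 0 < n) (hm : 0 < m)
    (A : Matrix (Fin n) (Fin n) ℝ) (B : Matrix (Fin m) (Fin m) ℝ)
    (C : Matrix (Fin n) (Fin m) ℝ)
    (hA : A.PosDef) (hB : B.PosDef)
    (hSigma : ∀ v : (Fin n ⊕ Fin m) → ℝ, 0 ≤ v ⬝ᵥ (Matrix.fromBlocks A C Cᵀ B).mulVec v)
    (hsing : ¬ IsUnit (Matrix.fromBlocks A C Cᵀ B)) :
    rho A B C = 1 := by
  have hposA : ∀ x : Fin n → ℝ, x ≠ 0 → 0 < x ⬝ᵥ A.mulVec x := fun x hx => by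
    simpa using hA.dotProduct_mulVec_pos hx
  have hposB : ∀ y : Fin m → ℝ, y ≠ 0 → 0 < y ⬝ᵥ B.mulVec y := fun y hy => by
    simpa using hB.dotProduct_mulVec_pos hy
  -- Upper bound: every element of the set is ≤ 1
  have hub : ∀ r ∈ {r : ℝ | ∃ (a : Fin n → ℝ) (b : Fin m → ℝ), a ≠ 0 ∧ b ≠ 0 ∧
      r = (a ⬝ᵥ C.mulVec b) / (Real.sqrt (a ⬝ᵥ A.mulVec a) * Real.sqrt (b ⬝ᵥ B.mulVec b))},
      r ≤ 1 := by
    rintro r ⟨a, b, ha, hb, rfl⟩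
    have hα : 0 < a ⬝ᵥ A.mulVec a := hposA a ha
    have hβ : 0 < b ⬝ᵥ B.mulVec b := hposB b hb
    set α := a ⬝ᵥ A.mulVec a
    set β := b ⬝ᵥ B.mulVec b
    set γ := a ⬝ᵥ C.mulVec b with hγ
    have hdisc : discrim α (2 * γ) β ≤ 0 := by
      apply discrim_le_zero
      intro t
      have h := hSigma (Sum.elim (t • a) b)
      rw [quad_form_blocks] at h
      have h1 : (t • a) ⬝ᵥ A.mulVec (t • a) = α * (t * t) := by
        simp [mulVec_smul, dotProduct_smul, smul_dotProduct]; ring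
      have h2 : (t • a) ⬝ᵥ C.mulVec b = γ * t := by
        simp [smul_dotProduct, hγ]; ring
      rw [h1, h2] at h
      linarith
    rw [discrim] at hdisc
    have hγ2 : γ ^ 2 ≤ α * β := by nlinarith
    have hs : γ ≤ Real.sqrt α * Real.sqrt β := by
      calc γ ≤ |γ| := le_abs_self γ
        _ = Real.sqrt (γ ^ 2) := (Real.sqrt_sq_eq_abs γ).symm
        _ ≤ Real.sqrt (α * β) := Real.sqrt_le_sqrt hγ2
        _ = Real.sqrt α * Real.sqrt β := Real.sqrt_mul hα.le β
    have hden : 0 < Real.sqrt α * Real.sqrt β :=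
      mul_pos (Real.sqrt_pos.mpr hα) (Real.sqrt_pos.mpr hβ)
    rw [div_le_one hden]
    exact hs
  -- Existence of a null vector
  have hdet : (Matrix.fromBlocks A C Cᵀ B).det = 0 := by
    by_contra h
    exact hsing ((Matrix.isUnit_iff_isUnit_det _).mpr (isUnit_iff_ne_zero.mpr h))
  obtain ⟨v, hv, hv0⟩ := (Matrix.exists_mulVec_eq_zero_iff).mpr hdet
  set a := v ∘ Sum.inl
  set b := v ∘ Sum.inr
  have hvelim : Sum.elim a b = v := Sum.elim_comp_inl_inr v
  have hquad : a ⬝ᵥ A.mulVec a + 2 * (a ⬝ᵥ C.mulVec b) + b ⬝ᵥ B.mulVec b = 0 := by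
    rw [← quad_form_blocks, hvelim, hv0, dotProduct_zero]
  have hbne : b ≠ 0 := by
    intro hb0
    have hane : a ≠ 0 := by
      intro ha0
      apply hv
      rw [← hvelim, ha0, hb0]
      ext i; cases i <;> simp
    have hα : 0 < a ⬝ᵥ A.mulVec a := hposA a hane
    rw [hb0] at hquad
    simp at hquad
    linarith
  have hane : a ≠ 0 := by
    intro ha0
    have hβ : 0 < b ⬝ᵥ B.mulVec b := hposB b hbne
    rw [ha0] at hquad
    simp at hquad
    linarith
  have hα : 0 < a ⬝ᵥ A.mulVec a := hposA a hane
  have hβ : 0 < b ⬝ᵥ B.mulVec b := hposB b hbne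
  -- the element given by (-a, b) equals 1
  have hna : (-a : Fin n → ℝ) ≠ 0 := neg_ne_zero.mpr hane
  have hAneg : (-a) ⬝ᵥ A.mulVec (-a) = a ⬝ᵥ A.mulVec a := by
    rw [mulVec_neg, neg_dotProduct, dotProduct_neg, neg_neg]
  have hCneg : (-a) ⬝ᵥ C.mulVec b = -(a ⬝ᵥ C.mulVec b) := by rw [neg_dotProduct]
  have hmem : (1 : ℝ) ∈ {r : ℝ | ∃ (a : Fin n → ℝ) (b : Fin m → ℝ), a ≠ 0 ∧ b ≠ 0 ∧
      r = (a ⬝ᵥ C.mulVec b) / (Real.sqrt (a ⬝ᵥ A.mulVec a) * Real.sqrt (b ⬝ᵥ B.mulVec b))} := by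
    refine ⟨-a, b, hna, hbne, ?_⟩
    rw [hAneg, hCneg]
    set α := a ⬝ᵥ A.mulVec a
    set β := b ⬝ᵥ B.mulVec b
    set γ := a ⬝ᵥ C.mulVec b
    have hden : 0 < Real.sqrt α * Real.sqrt β :=
      mul_pos (Real.sqrt_pos.mpr hα) (Real.sqrt_pos.mpr hβ)
    have hle : -γ / (Real.sqrt α * Real.sqrt β) ≤ 1 := by
      have := hub (-γ / (Real.sqrt α * Real.sqrt β)) ⟨-a, b, hna, hbne, by rw [hAneg, hCneg]⟩
      exact this
    have hge : 1 ≤ -γ / (Real.sqrt α * Real.sqrt β) := by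
      rw [le_div_iff₀ hden, one_mul]
      have hγval : -γ = (α + β) / 2 := by linarith
      rw [hγval]
      nlinarith [sq_nonneg (Real.sqrt α - Real.sqrt β), Real.sq_sqrt hα.le, Real.sq_sqrt hβ.le]
    linarith
  -- conclude
  unfold rho
  apply le_antisymm
  · exact csSup_le ⟨1, hmem⟩ hub
  · exact le_csSup ⟨1, hub⟩ hmem
end

section
/- (Lemma 1, column version.) Let A be a real symmetric positive definite n×n matrix, B a real symmetric positive definite m×m matrix, and C a real n×m matrix. Let a ∈ ℝⁿ and b ∈ ℝᵐ be an optimal CCA pair, i.e., aᵀ A a = 1, bᵀ B b = 1 and aᵀ C b = ρ(A,B,C). Let u ∈ ℝᵐ, d ∈ ℝ be such that B' = [[B, u],[uᵀ, d]] is positive definite, let v ∈ ℝⁿ, and let C' = [C v] be the n×(m+1) matrix obtained by appending v as a last column to C. Then ρ(A, B', C')² ≥ ρ(A, B, C)² + γ, where γ = (aᵀ C B⁻¹ u − aᵀ v)² / (d − uᵀ B⁻¹ u). -/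
open Matrix Filter Topology

private lemma posdef_coercive {ι : Type*} [Fintype ι] [Nonempty ι]
    {M : Matrix ι ι ℝ} (hM : M.PosDef) :
    ∃ c > 0, ∀ x : ι → ℝ, c * ‖x‖ ^ 2 ≤ x ⬝ᵥ M.mulVec x := by
  have hcont : Continuous fun x : ι → ℝ => x ⬝ᵥ M.mulVec x := by
    simp only [dotProduct, mulVec]
    exact continuous_finset_sum _ fun i _ =>
      (continuous_apply i).mul (continuous_finset_sum _ fun j _ =>
        continuous_const.mul (continuous_apply j))
  have hne : (Metric.sphere (0 : ι → ℝ) 1).Nonempty :=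
    NormedSpace.sphere_nonempty.mpr zero_le_one
  obtain ⟨x₀, hx₀, hmin⟩ :=
    (isCompact_sphere (0 : ι → ℝ) 1).exists_isMinOn hne hcont.continuousOn
  have hx₀norm : ‖x₀‖ = 1 := by simpa using hx₀
  have hx₀ne : x₀ ≠ 0 := by
    intro h; rw [h] at hx₀norm; simp at hx₀norm
  have hc : 0 < x₀ ⬝ᵥ M.mulVec x₀ := by simpa using hM.dotProduct_mulVec_pos hx₀ne
  refine ⟨_, hc, fun x => ?_⟩
  rcases eq_or_ne x 0 with rfl | hx
  · simp
  · have hxn : 0 < ‖x‖ := norm_pos_iff.mpr hx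
    have hymem : ‖x‖⁻¹ • x ∈ Metric.sphere (0 : ι → ℝ) 1 := by
      simp [norm_smul, abs_of_pos (inv_pos.mpr hxn), inv_mul_cancel₀ hxn.ne']
    have hQy : x₀ ⬝ᵥ M.mulVec x₀ ≤ (‖x‖⁻¹ • x) ⬝ᵥ M.mulVec (‖x‖⁻¹ • x) := hmin hymem
    have hexp : (‖x‖⁻¹ • x) ⬝ᵥ M.mulVec (‖x‖⁻¹ • x)
        = ‖x‖⁻¹ * (‖x‖⁻¹ * (x ⬝ᵥ M.mulVec x)) := by
      rw [Matrix.mulVec_smul, smul_dotProduct, dotProduct_smul]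
      simp [smul_eq_mul]
    rw [hexp] at hQy
    have h2 := mul_le_mul_of_nonneg_left hQy (le_of_lt (mul_pos hxn hxn))
    have h3 : ‖x‖ * ‖x‖ * (‖x‖⁻¹ * (‖x‖⁻¹ * (x ⬝ᵥ M.mulVec x))) = x ⬝ᵥ M.mulVec x := by
      field_simp
    rw [h3] at h2
    nlinarith [h2]

private lemma dot_bound {ι κ : Type*} [Fintype ι] [Fintype κ]
    (C : Matrix ι κ ℝ) (a : ι → ℝ) (b : κ → ℝ) :
    a ⬝ᵥ C.mulVec b ≤ (∑ i, ∑ j, |C i j|) * ‖a‖ * ‖b‖ := by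
  have h1 : a ⬝ᵥ C.mulVec b = ∑ i, ∑ j, a i * (C i j * b j) := by
    simp [dotProduct, mulVec, Finset.mul_sum]
  rw [h1]
  have h2 : ∀ i : ι, ∀ j : κ, a i * (C i j * b j) ≤ |C i j| * ‖a‖ * ‖b‖ := by
    intro i j
    have hai : |a i| ≤ ‖a‖ := by simpa using norm_le_pi_norm a i
    have hbj : |b j| ≤ ‖b‖ := by simpa using norm_le_pi_norm b j
    calc a i * (C i j * b j) ≤ |a i * (C i j * b j)| := le_abs_self _
      _ = |C i j| * |a i| * |b j| := by rw [abs_mul, abs_mul]; ring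
      _ ≤ |C i j| * ‖a‖ * ‖b‖ := by
          have h0 : (0:ℝ) ≤ ‖a‖ := norm_nonneg _
          have : |C i j| * |a i| ≤ |C i j| * ‖a‖ :=
            mul_le_mul_of_nonneg_left hai (abs_nonneg _)
          exact mul_le_mul this hbj (abs_nonneg _) (by positivity)
  calc (∑ i, ∑ j, a i * (C i j * b j)) ≤ ∑ i, ∑ j, |C i j| * ‖a‖ * ‖b‖ :=
        Finset.sum_le_sum fun i _ => Finset.sum_le_sum fun j _ => h2 i j
    _ = (∑ i, ∑ j, |C i j|) * ‖a‖ * ‖b‖ := by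
        rw [Finset.sum_mul, Finset.sum_mul]
        congr 1; ext i; rw [Finset.sum_mul, Finset.sum_mul]

private lemma rho_set_bddAbove {ι κ : Type*} [Fintype ι] [Fintype κ] [Nonempty ι] [Nonempty κ]
    {A : Matrix ι ι ℝ} {B : Matrix κ κ ℝ} (C : Matrix ι κ ℝ)
    (hA : A.PosDef) (hB : B.PosDef) :
    BddAbove {r : ℝ | ∃ (a : ι → ℝ) (b : κ → ℝ), a ≠ 0 ∧ b ≠ 0 ∧
      r = (a ⬝ᵥ C.mulVec b) / (Real.sqrt (a ⬝ᵥ A.mulVec a) * Real.sqrt (b ⬝ᵥ B.mulVec b))} := by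
  obtain ⟨cA, hcA, hAc⟩ := posdef_coercive hA
  obtain ⟨cB, hcB, hBc⟩ := posdef_coercive hB
  refine ⟨(∑ i, ∑ j, |C i j|) / (Real.sqrt cA * Real.sqrt cB), ?_⟩
  rintro r ⟨a, b, ha, hb, rfl⟩
  have hna : 0 < ‖a‖ := norm_pos_iff.mpr ha
  have hnb : 0 < ‖b‖ := norm_pos_iff.mpr hb
  have hQa : Real.sqrt cA * ‖a‖ ≤ Real.sqrt (a ⬝ᵥ A.mulVec a) := by
    have h := Real.sqrt_le_sqrt (hAc a)
    rwa [Real.sqrt_mul hcA.le, Real.sqrt_sq (norm_nonneg a)] at h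
  have hQb : Real.sqrt cB * ‖b‖ ≤ Real.sqrt (b ⬝ᵥ B.mulVec b) := by
    have h := Real.sqrt_le_sqrt (hBc b)
    rwa [Real.sqrt_mul hcB.le, Real.sqrt_sq (norm_nonneg b)] at h
  have hda : 0 < Real.sqrt cA * ‖a‖ := mul_pos (Real.sqrt_pos.mpr hcA) hna
  have hdb : 0 < Real.sqrt cB * ‖b‖ := mul_pos (Real.sqrt_pos.mpr hcB) hnb
  have hstep : (a ⬝ᵥ C.mulVec b) / (Real.sqrt (a ⬝ᵥ A.mulVec a) * Real.sqrt (b ⬝ᵥ B.mulVec b))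
      ≤ ((∑ i, ∑ j, |C i j|) * ‖a‖ * ‖b‖) / ((Real.sqrt cA * ‖a‖) * (Real.sqrt cB * ‖b‖)) := by
    apply div_le_div₀ (by positivity) (dot_bound C a b) (mul_pos hda hdb)
    exact mul_le_mul hQa hQb hdb.le (Real.sqrt_nonneg _)
  refine hstep.trans (le_of_eq ?_)
  field_simp

/-- Lemma 1, column version: if (a,b) is a normalized optimal CCA
pair for (A,B,C), then augmenting B to B' = [[B,u],[uᵀ,d]] (positive definite) and
C to C' = [C v] gives ρ(A,B',C')² ≥ ρ(A,B,C)² + (aᵀ C B⁻¹ u − aᵀ v)²/(d − uᵀ B⁻¹ u). -/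
theorem stmt_15 (n m : ℕ) (hn : 0 < n) (hm : 0 < m)
    (A : Matrix (Fin n) (Fin n) ℝ) (B : Matrix (Fin m) (Fin m) ℝ)
    (C : Matrix (Fin n) (Fin m) ℝ)
    (hA : A.PosDef) (hB : B.PosDef)
    (a : Fin n → ℝ) (b : Fin m → ℝ)
    (ha : a ⬝ᵥ A.mulVec a = 1) (hb : b ⬝ᵥ B.mulVec b = 1)
    (hopt : a ⬝ᵥ C.mulVec b = rho A B C)
    (u : Fin m → ℝ) (d : ℝ)
    (hB2 : (Matrix.fromBlocks B (Matrix.replicateCol (Fin 1) u) (Matrix.replicateRow (Fin 1) u)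
      (Matrix.of fun _ _ => d)).PosDef)
    (v : Fin n → ℝ) :
    (rho A B C) ^ 2 + (a ⬝ᵥ (C * B⁻¹).mulVec u - a ⬝ᵥ v) ^ 2 / (d - u ⬝ᵥ B⁻¹.mulVec u)
      ≤ (rho A
          (Matrix.fromBlocks B (Matrix.replicateCol (Fin 1) u) (Matrix.replicateRow (Fin 1) u)
            (Matrix.of fun _ _ => d))
          (Matrix.fromCols C (Matrix.replicateCol (Fin 1) v))) ^ 2 := by
  haveI : Nonempty (Fin n) := ⟨⟨0, hn⟩⟩
  haveI : Nonempty (Fin m) := ⟨⟨0, hm⟩⟩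
  set B' := Matrix.fromBlocks B (Matrix.replicateCol (Fin 1) u) (Matrix.replicateRow (Fin 1) u)
    (Matrix.of fun _ _ => d) with hB'def
  set C' := Matrix.fromCols C (Matrix.replicateCol (Fin 1) v) with hC'def
  set ρ := rho A B C with hρdef
  set p := B⁻¹.mulVec u with hpdef
  set S := d - u ⬝ᵥ B⁻¹.mulVec u with hSdef
  set w := a ⬝ᵥ (C * B⁻¹).mulVec u - a ⬝ᵥ v with hwdef
  -- basic facts about B
  have hBsymm : Bᵀ = B := by
    have := hB.isHermitian
    rwa [Matrix.IsHermitian, Matrix.conjTranspose_eq_transpose_of_trivial] at this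
  have hBdet : IsUnit B.det := isUnit_iff_ne_zero.mpr hB.det_pos.ne'
  have hBp : B.mulVec p = u := by
    rw [hpdef, Matrix.mulVec_mulVec, Matrix.mul_nonsing_inv _ hBdet, Matrix.one_mulVec]
  have hup : u ⬝ᵥ p = u ⬝ᵥ B⁻¹.mulVec u := rfl
  have hvec : p ᵥ* B = u := by
    have h := Matrix.vecMul_transpose B p
    rw [hBsymm] at h
    rw [h, hBp]
  -- small computation lemmas about the blocks
  have hcol : ∀ (z : Fin n → ℝ) (t : ℝ), (Matrix.replicateCol (Fin 1) z) *ᵥ (fun _ => t) = t • z := by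
    intro z t; ext i; simp [Matrix.mulVec, dotProduct, Matrix.replicateCol, mul_comm]
  have hcolm : ∀ (z : Fin m → ℝ) (t : ℝ), (Matrix.replicateCol (Fin 1) z) *ᵥ (fun _ => t) = t • z := by
    intro z t; ext i; simp [Matrix.mulVec, dotProduct, Matrix.replicateCol, mul_comm]
  have hrow : ∀ (y : Fin m → ℝ), (Matrix.replicateRow (Fin 1) u) *ᵥ y = fun _ => u ⬝ᵥ y := by
    intro y; ext i; simp [Matrix.mulVec, dotProduct, Matrix.replicateRow]
  -- quadratic form of B' on Sum.elim vectors
  have hquad : ∀ (y : Fin m → ℝ) (t : ℝ),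
      (Sum.elim y (fun _ => t)) ⬝ᵥ B'.mulVec (Sum.elim y (fun _ => t))
        = y ⬝ᵥ B.mulVec y + 2 * t * (u ⬝ᵥ y) + d * t ^ 2 := by
    intro y t
    rw [hB'def, Matrix.fromBlocks_mulVec]
    simp only [Sum.elim_comp_inl, Sum.elim_comp_inr]
    rw [hcolm u t, hrow y, sumElim_dotProduct_sumElim, dotProduct_add, dotProduct_add,
      dotProduct_smul]
    have h1 : (Matrix.of fun (_ _ : Fin 1) => d) *ᵥ (fun _ => t) = fun _ => d * t := by
      ext i; simp [Matrix.mulVec, dotProduct]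
    rw [h1]
    have h2 : (fun _ : Fin 1 => t) ⬝ᵥ (fun _ => u ⬝ᵥ y) = t * (u ⬝ᵥ y) := by
      simp [dotProduct]
    have h3 : (fun _ : Fin 1 => t) ⬝ᵥ (fun _ => d * t) = t * (d * t) := by
      simp [dotProduct]
    rw [h2, h3, dotProduct_comm y u]
    simp only [smul_eq_mul]
    ring
  -- numerator of C' on Sum.elim vectors
  have hnum : ∀ (y : Fin m → ℝ) (t : ℝ),
      a ⬝ᵥ C'.mulVec (Sum.elim y (fun _ => t)) = a ⬝ᵥ C.mulVec y + t * (a ⬝ᵥ v) := by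
    intro y t
    rw [hC'def, Matrix.fromCols_mulVec_sumElim, dotProduct_add, hcol v t, dotProduct_smul]
    simp [smul_eq_mul]
  -- Schur complement is positive
  have hSpos : 0 < S := by
    have hx : (Sum.elim (-p) (fun _ : Fin 1 => (1:ℝ))) ≠ 0 := by
      intro h
      have := congrFun h (Sum.inr 0)
      simp at this
    have h0 := hB2.dotProduct_mulVec_pos hx
    rw [star_trivial] at h0
    have hq := hquad (-p) 1
    have hpBp : (-p) ⬝ᵥ B.mulVec (-p) = u ⬝ᵥ p := by
      rw [Matrix.mulVec_neg, dotProduct_neg, neg_dotProduct, neg_neg,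
        Matrix.dotProduct_mulVec, hvec, dotProduct_comm]
    rw [hpBp, dotProduct_neg] at hq
    rw [hq] at h0
    rw [hSdef, ← hup]
    nlinarith [h0]
  -- denominator formula
  have hden : ∀ t : ℝ, (Sum.elim (b - t • p) (fun _ : Fin 1 => t)) ⬝ᵥ
      B'.mulVec (Sum.elim (b - t • p) (fun _ : Fin 1 => t)) = 1 + t ^ 2 * S := by
    intro t
    rw [hquad (b - t • p) t]
    have e1 : (b - t • p) ⬝ᵥ B.mulVec (b - t • p)
        = 1 - 2 * t * (u ⬝ᵥ b) + t ^ 2 * (u ⬝ᵥ p) := by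
      have hBpb : p ⬝ᵥ B.mulVec b = u ⬝ᵥ b := by
        rw [Matrix.dotProduct_mulVec, hvec]
      have hbBp : b ⬝ᵥ B.mulVec p = u ⬝ᵥ b := by
        rw [hBp, dotProduct_comm]
      have hpBp : p ⬝ᵥ B.mulVec p = u ⬝ᵥ p := by
        rw [hBp, dotProduct_comm]
      rw [Matrix.mulVec_sub, Matrix.mulVec_smul, dotProduct_sub, sub_dotProduct,
        sub_dotProduct, dotProduct_smul, dotProduct_smul, smul_dotProduct, smul_dotProduct,
        hb, hBpb, hbBp, hpBp]
      simp only [smul_eq_mul]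
      ring
    have e2 : u ⬝ᵥ (b - t • p) = u ⬝ᵥ b - t * (u ⬝ᵥ p) := by
      rw [dotProduct_sub, dotProduct_smul]; simp [smul_eq_mul]
    rw [e1, e2, hSdef, ← hup]
    ring
  -- numerator formula
  have hnum' : ∀ t : ℝ, a ⬝ᵥ C'.mulVec (Sum.elim (b - t • p) (fun _ : Fin 1 => t))
      = ρ - t * w := by
    intro t
    rw [hnum (b - t • p) t]
    have e1 : a ⬝ᵥ C.mulVec (b - t • p) = ρ - t * (a ⬝ᵥ C.mulVec p) := by
      rw [Matrix.mulVec_sub, Matrix.mulVec_smul, dotProduct_sub, dotProduct_smul, hopt]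
      simp [smul_eq_mul]
    have e2 : a ⬝ᵥ (C * B⁻¹).mulVec u = a ⬝ᵥ C.mulVec p := by
      rw [hpdef, Matrix.mulVec_mulVec]
    rw [e1, hwdef, e2]
    ring
  -- nonzero vectors
  have hane : a ≠ 0 := by
    intro h; rw [h] at ha; simp at ha
  have hbne : b ≠ 0 := by
    intro h; rw [h] at hb; simp at hb
  have hb'ne : ∀ t : ℝ, (Sum.elim (b - t • p) (fun _ : Fin 1 => t)) ≠ 0 := by
    intro t h
    rcases eq_or_ne t 0 with rfl | ht
    · apply hbne
      funext i
      have := congrFun h (Sum.inl i)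
      simpa using this
    · exact ht (by simpa using congrFun h (Sum.inr 0))
  -- the key inequality: every (ρ - t*w)/√(1+t²S) is ≤ ρ'
  set ρ' := rho A B' C' with hρ'def
  have hbdd' : BddAbove {r : ℝ | ∃ (x : Fin n → ℝ) (y : Sum (Fin m) (Fin 1) → ℝ),
      x ≠ 0 ∧ y ≠ 0 ∧ r = (x ⬝ᵥ C'.mulVec y) /
        (Real.sqrt (x ⬝ᵥ A.mulVec x) * Real.sqrt (y ⬝ᵥ B'.mulVec y))} :=
    rho_set_bddAbove C' hA hB2
  have hkey : ∀ t : ℝ, (ρ - t * w) / Real.sqrt (1 + t ^ 2 * S) ≤ ρ' := by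
    intro t
    apply le_csSup hbdd'
    refine ⟨a, Sum.elim (b - t • p) (fun _ : Fin 1 => t), hane, hb'ne t, ?_⟩
    rw [hnum' t, hden t, ha, Real.sqrt_one, one_mul]
  -- ρ ≥ 0
  have hbdd : BddAbove {r : ℝ | ∃ (x : Fin n → ℝ) (y : Fin m → ℝ),
      x ≠ 0 ∧ y ≠ 0 ∧ r = (x ⬝ᵥ C.mulVec y) /
        (Real.sqrt (x ⬝ᵥ A.mulVec x) * Real.sqrt (y ⬝ᵥ B.mulVec y))} :=
    rho_set_bddAbove C hA hB
  have hρnonneg : 0 ≤ ρ := by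
    have hmem : -ρ ≤ ρ := by
      apply le_csSup hbdd
      refine ⟨-a, b, neg_ne_zero.mpr hane, hbne, ?_⟩
      have e1 : (-a) ⬝ᵥ A.mulVec (-a) = 1 := by
        rw [Matrix.mulVec_neg, dotProduct_neg, neg_dotProduct, neg_neg, ha]
      have e2 : (-a) ⬝ᵥ C.mulVec b = -ρ := by rw [neg_dotProduct, hopt]
      rw [e1, e2, hb, Real.sqrt_one, one_mul, div_one]
    linarith
  have hρρ' : ρ ≤ ρ' := by
    have h0 := hkey 0
    rw [show (1:ℝ) + 0 ^ 2 * S = 1 by ring, Real.sqrt_one, div_one, zero_mul, sub_zero] at h0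
    exact h0
  -- final case analysis
  rcases eq_or_ne w 0 with hw0 | hwne
  · rw [hw0]
    norm_num
    exact pow_le_pow_left₀ hρnonneg hρρ' 2
  rcases eq_or_lt_of_le hρnonneg with hρ0 | hρpos
  · -- ρ = 0
    rw [← hρ0, show ((0:ℝ) ^ 2 + w ^ 2 / S) = w ^ 2 / S from by ring]
    -- limit argument
    · have hfle : ∀ k : ℕ, ((k:ℝ) * w ^ 2) ^ 2 / (1 + (k:ℝ) ^ 2 * w ^ 2 * S) ≤ ρ' ^ 2 := by
        intro k
        have h1 := hkey (-(k:ℝ) * w)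
        have hg0 : 0 ≤ (ρ - (-(k:ℝ) * w) * w) := by
          rw [← hρ0, show (0:ℝ) - -(k:ℝ) * w * w = (k:ℝ) * w ^ 2 from by ring]
          positivity
        have hden0 : 0 < 1 + (-(k:ℝ) * w) ^ 2 * S := by positivity
        have hsq := pow_le_pow_left₀ (div_nonneg hg0 (Real.sqrt_nonneg _)) h1 2
        rw [div_pow, Real.sq_sqrt hden0.le] at hsq
        calc ((k:ℝ) * w ^ 2) ^ 2 / (1 + (k:ℝ) ^ 2 * w ^ 2 * S)
            = (ρ - (-(k:ℝ) * w) * w) ^ 2 / (1 + (-(k:ℝ) * w) ^ 2 * S) := by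
              rw [← hρ0]; ring_nf
          _ ≤ ρ' ^ 2 := hsq
      have htend : Tendsto (fun k : ℕ => ((k:ℝ) * w ^ 2) ^ 2 / (1 + (k:ℝ) ^ 2 * w ^ 2 * S))
          atTop (nhds (w ^ 2 / S)) := by
        have heq : ∀ᶠ k : ℕ in atTop, ((k:ℝ) * w ^ 2) ^ 2 / (1 + (k:ℝ) ^ 2 * w ^ 2 * S)
            = w ^ 4 / (1 / (k:ℝ) ^ 2 + w ^ 2 * S) := by
          filter_upwards [eventually_ge_atTop 1] with k hk
          have hk0 : (k:ℝ) ≠ 0 := by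
            exact_mod_cast Nat.one_le_iff_ne_zero.mp hk
          have hden0 : (0:ℝ) < 1 + (k:ℝ) ^ 2 * w ^ 2 * S := by positivity
          field_simp
        have h1 : Tendsto (fun k : ℕ => 1 / (k:ℝ) ^ 2) atTop (nhds 0) := by
          have := tendsto_one_div_atTop_nhds_zero_nat (𝕜 := ℝ)
          have h2 := this.mul this
          simpa [one_div, ← mul_inv, ← sq] using h2
        have h2 : Tendsto (fun k : ℕ => 1 / (k:ℝ) ^ 2 + w ^ 2 * S) atTop
            (nhds (0 + w ^ 2 * S)) := h1.add_const _
        have hldne : (0:ℝ) + w ^ 2 * S ≠ 0 := by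
          rw [zero_add]; positivity
        have h3 := (tendsto_const_nhds (x := w ^ 4)).div h2 hldne
        have heq' : (fun k : ℕ => w ^ 4 / (1 / (k:ℝ) ^ 2 + w ^ 2 * S))
            =ᶠ[atTop] fun k : ℕ => ((k:ℝ) * w ^ 2) ^ 2 / (1 + (k:ℝ) ^ 2 * w ^ 2 * S) :=
          heq.mono fun k hk => hk.symm
        have h4 : Tendsto (fun k : ℕ => w ^ 4 / (1 / (k:ℝ) ^ 2 + w ^ 2 * S)) atTop
            (nhds (w ^ 4 / (0 + w ^ 2 * S))) := h3
        have h5 := h4.congr' heq'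
        rw [zero_add, show w ^ 4 / (w ^ 2 * S) = w ^ 2 / S from by
          rw [show w ^ 4 = w ^ 2 * w ^ 2 from by ring,
            mul_div_mul_left _ _ (pow_ne_zero 2 hwne)]] at h5
        exact h5
      exact le_of_tendsto htend (Filter.Eventually.of_forall hfle)
  · -- ρ > 0
    set t₀ := -w / (ρ * S) with ht₀
    have h1 := hkey t₀
    have hg0 : 0 ≤ ρ - t₀ * w := by
      rw [ht₀]
      have : ρ - -w / (ρ * S) * w = ρ + w ^ 2 / (ρ * S) := by ring
      rw [this]; positivity
    have hden0 : 0 < 1 + t₀ ^ 2 * S := by positivity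
    have hsq := pow_le_pow_left₀ (div_nonneg hg0 (Real.sqrt_nonneg _)) h1 2
    rw [div_pow, Real.sq_sqrt hden0.le] at hsq
    have hfinal : (ρ - t₀ * w) ^ 2 / (1 + t₀ ^ 2 * S) = ρ ^ 2 + w ^ 2 / S := by
      rw [ht₀]
      field_simp [hρpos.ne', hSpos.ne']
      ring
    rw [hfinal] at hsq
    exact hsq
end

section
/- (Lemma 1, row version.) Let A be a real symmetric positive definite n×n matrix, B a real symmetric positive definite m×m matrix, and C a real n×m matrix. Let a ∈ ℝⁿ and b ∈ ℝᵐ be an optimal CCA pair, i.e., aᵀ A a = 1, bᵀ B b = 1 and aᵀ C b = ρ(A,B,C). Let w ∈ ℝⁿ, e ∈ ℝ be such that A' = [[A, w],[wᵀ, e]] is positive definite, let r ∈ ℝᵐ, and let C'' be the (n+1)×m matrix obtained by appending rᵀ as a last row to C. Then ρ(A', B, C'')² ≥ ρ(A, B, C)² + δ, where δ = (bᵀ Cᵀ A⁻¹ w − bᵀ r)² / (e − wᵀ A⁻¹ w). -/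
open Matrix

private lemma quad_lower {ι : Type*} [Fintype ι] [Nonempty ι] [DecidableEq ι]
    (M : Matrix ι ι ℝ) (hM : M.PosDef) :
    ∃ c > 0, ∀ x : ι → ℝ, c * (x ⬝ᵥ x) ≤ x ⬝ᵥ M *ᵥ x := by
  have hfc : Continuous fun x : ι → ℝ => x ⬝ᵥ M *ᵥ x := by
    simp only [dotProduct, mulVec]
    exact continuous_finset_sum _ fun i _ =>
      (continuous_apply i).mul (continuous_finset_sum _ fun j _ =>
        continuous_const.mul (continuous_apply j))
  have hdc : Continuous fun x : ι → ℝ => x ⬝ᵥ x := by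
    simp only [dotProduct]
    exact continuous_finset_sum _ fun i _ => (continuous_apply i).mul (continuous_apply i)
  set S : Set (ι → ℝ) := {x | x ⬝ᵥ x = 1} with hS
  have hSne : S.Nonempty := by
    refine ⟨Pi.single (Classical.arbitrary ι) 1, ?_⟩
    simp [hS, dotProduct, Pi.single_apply]
  have hSclosed : IsClosed S := isClosed_eq hdc continuous_const
  have hSbdd : Bornology.IsBounded S := by
    apply Bornology.IsBounded.subset (Metric.isBounded_closedBall (x := (0 : ι → ℝ)) (r := 1))
    intro x hx
    simp only [Metric.mem_closedBall, dist_zero_right]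
    rw [pi_norm_le_iff_of_nonneg zero_le_one]
    intro i
    rw [Real.norm_eq_abs, abs_le_one_iff_mul_self_le_one]
    calc x i * x i ≤ x ⬝ᵥ x := by
          apply Finset.single_le_sum (f := fun j => x j * x j) (fun j _ => mul_self_nonneg _)
            (Finset.mem_univ i)
      _ = 1 := hx
  obtain ⟨x₀, hx₀S, hmin⟩ := (Metric.isCompact_of_isClosed_isBounded hSclosed hSbdd).exists_isMinOn
    hSne hfc.continuousOn
  have hx₀ne : x₀ ≠ 0 := by
    intro h
    rw [hS, Set.mem_setOf_eq, h] at hx₀S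
    simp at hx₀S
  refine ⟨x₀ ⬝ᵥ M *ᵥ x₀, by simpa using hM.dotProduct_mulVec_pos hx₀ne, fun x => ?_⟩
  rcases eq_or_ne x 0 with rfl | hx
  · simp
  · set s := Real.sqrt (x ⬝ᵥ x) with hsdef
    have hxx : 0 < x ⬝ᵥ x := by
      rcases lt_or_eq_of_le (Finset.sum_nonneg fun i _ => mul_self_nonneg (x i) : (0:ℝ) ≤ x ⬝ᵥ x) with h | h
      · exact h
      · exact absurd (dotProduct_self_eq_zero.mp h.symm) hx
    have hs : 0 < s := Real.sqrt_pos.mpr hxx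
    have hs2 : s * s = x ⬝ᵥ x := Real.mul_self_sqrt hxx.le
    have hyS : (s⁻¹ • x) ∈ S := by
      simp only [hS, Set.mem_setOf_eq, smul_dotProduct, dotProduct_smul, smul_eq_mul]
      field_simp
      nlinarith
    have := hmin hyS
    simp only [Set.mem_setOf_eq, smul_dotProduct, dotProduct_smul, mulVec_smul,
      smul_eq_mul] at this
    calc (x₀ ⬝ᵥ M *ᵥ x₀) * (x ⬝ᵥ x) = (x₀ ⬝ᵥ M *ᵥ x₀) * (s * s) := by rw [hs2]
      _ ≤ (s⁻¹ * (s⁻¹ * (x ⬝ᵥ M *ᵥ x))) * (s * s) :=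
          mul_le_mul_of_nonneg_right this (by positivity)
      _ = x ⬝ᵥ M *ᵥ x := by field_simp

private lemma abs_le_sqrt_dot {ι : Type*} [Fintype ι] (a : ι → ℝ) (i : ι) :
    |a i| ≤ Real.sqrt (a ⬝ᵥ a) := by
  rw [← Real.sqrt_sq_eq_abs]
  apply Real.sqrt_le_sqrt
  calc a i ^ 2 = a i * a i := sq (a i)
    _ ≤ a ⬝ᵥ a := Finset.single_le_sum (f := fun j => a j * a j)
        (fun j _ => mul_self_nonneg _) (Finset.mem_univ i)

private lemma num_bound {ι κ : Type*} [Fintype ι] [Fintype κ]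
    (C : Matrix ι κ ℝ) (a : ι → ℝ) (b : κ → ℝ) :
    a ⬝ᵥ C *ᵥ b ≤ (∑ i, ∑ j, |C i j|) * (Real.sqrt (a ⬝ᵥ a) * Real.sqrt (b ⬝ᵥ b)) := by
  have hna : ∀ i, |a i| ≤ Real.sqrt (a ⬝ᵥ a) := abs_le_sqrt_dot a
  have hnb : ∀ j, |b j| ≤ Real.sqrt (b ⬝ᵥ b) := abs_le_sqrt_dot b
  calc a ⬝ᵥ C *ᵥ b = ∑ i, ∑ j, a i * (C i j * b j) := by
        simp [dotProduct, mulVec, Finset.mul_sum]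
    _ ≤ ∑ i, ∑ j, |C i j| * (Real.sqrt (a ⬝ᵥ a) * Real.sqrt (b ⬝ᵥ b)) := by
        apply Finset.sum_le_sum; intro i _
        apply Finset.sum_le_sum; intro j _
        calc a i * (C i j * b j) ≤ |a i * (C i j * b j)| := le_abs_self _
          _ = |C i j| * (|a i| * |b j|) := by rw [abs_mul, abs_mul]; ring
          _ ≤ |C i j| * (Real.sqrt (a ⬝ᵥ a) * Real.sqrt (b ⬝ᵥ b)) := by
              apply mul_le_mul_of_nonneg_left _ (abs_nonneg _)
              exact mul_le_mul (hna i) (hnb j) (abs_nonneg _) (Real.sqrt_nonneg _)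
    _ = (∑ i, ∑ j, |C i j|) * (Real.sqrt (a ⬝ᵥ a) * Real.sqrt (b ⬝ᵥ b)) := by
        rw [Finset.sum_mul]; congr 1; ext i; rw [Finset.sum_mul]

private lemma rho_bdd {ι κ : Type*} [Fintype ι] [Fintype κ]
    (A : Matrix ι ι ℝ) (B : Matrix κ κ ℝ) (C : Matrix ι κ ℝ)
    (cA cB : ℝ) (hcA : 0 < cA) (hcB : 0 < cB)
    (hA : ∀ x : ι → ℝ, cA * (x ⬝ᵥ x) ≤ x ⬝ᵥ A *ᵥ x)
    (hB : ∀ x : κ → ℝ, cB * (x ⬝ᵥ x) ≤ x ⬝ᵥ B *ᵥ x) :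
    BddAbove {r : ℝ | ∃ (a : ι → ℝ) (b : κ → ℝ), a ≠ 0 ∧ b ≠ 0 ∧
      r = (a ⬝ᵥ C.mulVec b) / (Real.sqrt (a ⬝ᵥ A.mulVec a) * Real.sqrt (b ⬝ᵥ B.mulVec b))} := by
  set K : ℝ := ∑ i, ∑ j, |C i j| with hK
  have hK0 : 0 ≤ K := Finset.sum_nonneg fun i _ => Finset.sum_nonneg fun j _ => abs_nonneg _
  refine ⟨K / (Real.sqrt cA * Real.sqrt cB), fun rr hrr => ?_⟩
  obtain ⟨a, b, ha0, hb0, rfl⟩ := hrr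
  have haa : 0 < a ⬝ᵥ a := by
    rcases lt_or_eq_of_le (Finset.sum_nonneg fun i _ => mul_self_nonneg (a i) : (0:ℝ) ≤ a ⬝ᵥ a)
      with h | h
    · exact h
    · exact absurd (dotProduct_self_eq_zero.mp h.symm) ha0
  have hbb : 0 < b ⬝ᵥ b := by
    rcases lt_or_eq_of_le (Finset.sum_nonneg fun i _ => mul_self_nonneg (b i) : (0:ℝ) ≤ b ⬝ᵥ b)
      with h | h
    · exact h
    · exact absurd (dotProduct_self_eq_zero.mp h.symm) hb0
  set na := Real.sqrt (a ⬝ᵥ a) with hna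
  set nb := Real.sqrt (b ⬝ᵥ b) with hnb
  have hna0 : 0 < na := Real.sqrt_pos.mpr haa
  have hnb0 : 0 < nb := Real.sqrt_pos.mpr hbb
  have hsa : Real.sqrt cA * na ≤ Real.sqrt (a ⬝ᵥ A *ᵥ a) := by
    rw [← Real.sqrt_mul hcA.le]
    exact Real.sqrt_le_sqrt (hA a)
  have hsb : Real.sqrt cB * nb ≤ Real.sqrt (b ⬝ᵥ B *ᵥ b) := by
    rw [← Real.sqrt_mul hcB.le]
    exact Real.sqrt_le_sqrt (hB b)
  have hden : 0 < Real.sqrt cA * na * (Real.sqrt cB * nb) := by positivity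
  have hden2 : Real.sqrt cA * na * (Real.sqrt cB * nb)
      ≤ Real.sqrt (a ⬝ᵥ A *ᵥ a) * Real.sqrt (b ⬝ᵥ B *ᵥ b) :=
    mul_le_mul hsa hsb (by positivity) (Real.sqrt_nonneg _)
  have hnum : a ⬝ᵥ C *ᵥ b ≤ K * (na * nb) := num_bound C a b
  calc a ⬝ᵥ C *ᵥ b / (Real.sqrt (a ⬝ᵥ A *ᵥ a) * Real.sqrt (b ⬝ᵥ B *ᵥ b))
      ≤ K * (na * nb) / (Real.sqrt cA * na * (Real.sqrt cB * nb)) := by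
        rcases le_or_gt (a ⬝ᵥ C *ᵥ b) 0 with h | h
        · exact le_trans (div_nonpos_of_nonpos_of_nonneg h (le_trans hden.le hden2))
            (by positivity)
        · exact div_le_div₀ (by positivity) hnum hden hden2
    _ = K / (Real.sqrt cA * Real.sqrt cB) := by
        field_simp

/-- Lemma 1, row version: if (a,b) is a normalized optimal CCA
pair for (A,B,C), then augmenting A to A' = [[A,w],[wᵀ,e]] (positive definite) and
C to C'' (appending row rᵀ) gives ρ(A',B,C'')² ≥ ρ(A,B,C)² + (bᵀ Cᵀ A⁻¹ w − bᵀ r)²/(e − wᵀ A⁻¹ w). -/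
theorem stmt_16 (n m : ℕ) (hn : 0 < n) (hm : 0 < m)
    (A : Matrix (Fin n) (Fin n) ℝ) (B : Matrix (Fin m) (Fin m) ℝ)
    (C : Matrix (Fin n) (Fin m) ℝ)
    (hA : A.PosDef) (hB : B.PosDef)
    (a : Fin n → ℝ) (b : Fin m → ℝ)
    (ha : a ⬝ᵥ A.mulVec a = 1) (hb : b ⬝ᵥ B.mulVec b = 1)
    (hopt : a ⬝ᵥ C.mulVec b = rho A B C)
    (w : Fin n → ℝ) (e : ℝ)
    (hA2 : (Matrix.fromBlocks A (Matrix.replicateCol (Fin 1) w) (Matrix.replicateRow (Fin 1) w)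
      (Matrix.of fun _ _ => e)).PosDef)
    (r : Fin m → ℝ) :
    (rho A B C) ^ 2 + (b ⬝ᵥ (Cᵀ * A⁻¹).mulVec w - b ⬝ᵥ r) ^ 2 / (e - w ⬝ᵥ A⁻¹.mulVec w)
      ≤ (rho
          (Matrix.fromBlocks A (Matrix.replicateCol (Fin 1) w) (Matrix.replicateRow (Fin 1) w)
            (Matrix.of fun _ _ => e))
          B
          (Matrix.fromRows C (Matrix.replicateRow (Fin 1) r))) ^ 2 := by
  classical
  have hmne : Nonempty (Fin m) := ⟨⟨0, hm⟩⟩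
  have hAdet : IsUnit A.det := isUnit_iff_ne_zero.mpr hA.det_pos.ne'
  have hAinv : A * A⁻¹ = 1 := mul_nonsing_inv A hAdet
  have hAT : Aᵀ = A := (by simpa using hA.1 : A.IsSymm).eq
  set A' : Matrix (Fin n ⊕ Fin 1) (Fin n ⊕ Fin 1) ℝ :=
    fromBlocks A (replicateCol (Fin 1) w) (replicateRow (Fin 1) w) (of fun _ _ => e) with hA'
  set C'' : Matrix (Fin n ⊕ Fin 1) (Fin m) ℝ := fromRows C (replicateRow (Fin 1) r) with hC''
  set u : Fin n → ℝ := A⁻¹ *ᵥ w with hu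
  have hAu : A *ᵥ u = w := by rw [hu, mulVec_mulVec, hAinv, one_mulVec]
  set d : ℝ := e - w ⬝ᵥ u with hd
  set g : ℝ := b ⬝ᵥ (Cᵀ * A⁻¹) *ᵥ w - b ⬝ᵥ r with hg
  set ρ : ℝ := rho A B C with hρ
  set ρ' : ℝ := rho A' B C'' with hρ'
  -- generic quadratic form computation
  have hquadgen : ∀ (y : Fin n → ℝ) (t : ℝ),
      (Sum.elim y (fun _ : Fin 1 => t)) ⬝ᵥ A' *ᵥ (Sum.elim y fun _ => t)
        = y ⬝ᵥ A *ᵥ y + t * (y ⬝ᵥ w) + t * (w ⬝ᵥ y) + t ^ 2 * e := by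
    intro y t
    rw [hA', fromBlocks_mulVec]
    have e1 : (Sum.elim y (fun _ : Fin 1 => t)) ∘ Sum.inl = y := rfl
    have e2 : (Sum.elim y (fun _ : Fin 1 => t)) ∘ Sum.inr = fun _ => t := rfl
    rw [e1, e2, sumElim_dotProduct_sumElim]
    have hcol : (replicateCol (Fin 1) w) *ᵥ (fun _ => t) = t • w := by
      ext i; simp [mulVec, dotProduct, Matrix.replicateCol]; ring
    have hrow : (replicateRow (Fin 1) w) *ᵥ y = fun _ : Fin 1 => w ⬝ᵥ y := by
      ext i; simp [mulVec, dotProduct, Matrix.replicateRow]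
    have hofe : (of fun _ _ : Fin 1 => e) *ᵥ (fun _ : Fin 1 => t) = fun _ : Fin 1 => e * t := by
      ext i; simp [mulVec, dotProduct]
    rw [hcol, hrow, hofe]
    have hfin1 : (fun _ : Fin 1 => t) ⬝ᵥ ((fun _ : Fin 1 => w ⬝ᵥ y) + fun _ => e * t)
        = t * (w ⬝ᵥ y) + t * (e * t) := by
      simp [dotProduct, Fin.sum_univ_one, mul_add]
    rw [dotProduct_add, dotProduct_smul, smul_eq_mul, hfin1]
    ring
  have hd0 : 0 < d := by
    have hne : (Sum.elim (-u) (fun _ : Fin 1 => (1:ℝ))) ≠ 0 := by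
      intro h
      have := congrFun h (Sum.inr 0)
      simpa using this
    have hpos := hA2.dotProduct_mulVec_pos hne
    have hval := hquadgen (-u) 1
    have hAu' : (-u) ⬝ᵥ A *ᵥ (-u) = w ⬝ᵥ u := by
      rw [mulVec_neg, dotProduct_neg, neg_dotProduct, neg_neg, hAu, dotProduct_comm]
    rw [hAu'] at hval
    have : (0:ℝ) < Sum.elim (-u) (fun _ : Fin 1 => (1:ℝ)) ⬝ᵥ A' *ᵥ Sum.elim (-u) fun _ => 1 := by
      simpa using hpos
    rw [hval] at this
    have hcomm : (-u) ⬝ᵥ w = -(w ⬝ᵥ u) := by rw [neg_dotProduct, dotProduct_comm]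
    have hcomm2 : w ⬝ᵥ (-u) = -(w ⬝ᵥ u) := by rw [dotProduct_neg]
    rw [hd]
    nlinarith [this, hcomm, hcomm2]
  have hsym : u ⬝ᵥ A *ᵥ a = w ⬝ᵥ a := by
    rw [dotProduct_mulVec, ← mulVec_transpose, hAT, hAu]
  have hquad : ∀ t : ℝ,
      (Sum.elim (a - t • u) (fun _ : Fin 1 => t)) ⬝ᵥ A' *ᵥ (Sum.elim (a - t • u) fun _ => t)
        = 1 + t ^ 2 * d := by
    intro t
    rw [hquadgen]
    have h1 : (a - t • u) ⬝ᵥ A *ᵥ (a - t • u)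
        = 1 - t * (a ⬝ᵥ w) - t * (w ⬝ᵥ a) + t ^ 2 * (u ⬝ᵥ w) := by
      rw [mulVec_sub, mulVec_smul, hAu]
      simp only [sub_dotProduct, dotProduct_sub, smul_dotProduct, dotProduct_smul, smul_eq_mul,
        ha, hsym]
      ring
    have h2 : (a - t • u) ⬝ᵥ w = a ⬝ᵥ w - t * (u ⬝ᵥ w) := by
      simp [sub_dotProduct, smul_dotProduct]
    have h3 : w ⬝ᵥ (a - t • u) = w ⬝ᵥ a - t * (w ⬝ᵥ u) := by
      simp [dotProduct_sub, dotProduct_smul]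
    rw [h1, h2, h3, hd, dotProduct_comm u w]
    ring
  have hgeq : g = u ⬝ᵥ C *ᵥ b - r ⬝ᵥ b := by
    rw [hg]
    congr 1
    · rw [← mulVec_mulVec, ← hu, dotProduct_mulVec, ← mulVec_transpose, transpose_transpose,
        dotProduct_comm]
    · rw [dotProduct_comm]
  have hnum : ∀ t : ℝ,
      (Sum.elim (a - t • u) (fun _ : Fin 1 => t)) ⬝ᵥ C'' *ᵥ b = ρ - t * g := by
    intro t
    rw [hC'', fromRows_mulVec, sumElim_dotProduct_sumElim]
    have hrowr : (replicateRow (Fin 1) r) *ᵥ b = fun _ : Fin 1 => r ⬝ᵥ b := by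
      ext i; simp [mulVec, dotProduct, Matrix.replicateRow]
    have hfin1 : (fun _ : Fin 1 => t) ⬝ᵥ (fun _ : Fin 1 => r ⬝ᵥ b) = t * (r ⬝ᵥ b) := by
      simp [dotProduct, Fin.sum_univ_one]
    rw [hrowr, hfin1, sub_dotProduct, smul_dotProduct, smul_eq_mul, hopt, hgeq]
    ring
  -- boundedness of the augmented rho set
  obtain ⟨cA', hcA', hA'bound⟩ := quad_lower A' hA2
  obtain ⟨cB, hcB, hBbound⟩ := quad_lower B hB
  have hbddS := rho_bdd A' B C'' cA' cB hcA' hcB hA'bound hBbound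
  have hane : a ≠ 0 := by
    intro h; rw [h] at ha; simp at ha
  have hbne : b ≠ 0 := by
    intro h; rw [h] at hb; simp at hb
  have key : ∀ t : ℝ, (ρ - t * g) ^ 2 / (1 + t ^ 2 * d) ≤ ρ' ^ 2 := by
    intro t
    set xt : Fin n ⊕ Fin 1 → ℝ := Sum.elim (a - t • u) (fun _ => t) with hxt
    have hD : (0:ℝ) < 1 + t ^ 2 * d := by positivity
    have hxtne : xt ≠ 0 := by
      intro h0
      have ht : t = 0 := congrFun h0 (Sum.inr 0)
      have hal : a - t • u = 0 := funext fun i => congrFun h0 (Sum.inl i)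
      rw [ht, zero_smul, sub_zero] at hal
      exact hane hal
    have hvalx : (xt ⬝ᵥ C'' *ᵥ b) / (Real.sqrt (xt ⬝ᵥ A' *ᵥ xt) * Real.sqrt (b ⬝ᵥ B *ᵥ b))
        = (ρ - t * g) / Real.sqrt (1 + t ^ 2 * d) := by
      rw [hxt, hquad t, hnum t, hb, Real.sqrt_one, mul_one]
    have h1 : (ρ - t * g) / Real.sqrt (1 + t ^ 2 * d) ≤ ρ' := by
      apply le_csSup hbddS
      exact ⟨xt, b, hxtne, hbne, hvalx.symm⟩
    have hvalx' : ((-xt) ⬝ᵥ C'' *ᵥ b) / (Real.sqrt ((-xt) ⬝ᵥ A' *ᵥ (-xt)) * Real.sqrt (b ⬝ᵥ B *ᵥ b))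
        = -((ρ - t * g) / Real.sqrt (1 + t ^ 2 * d)) := by
      have hq : (-xt) ⬝ᵥ A' *ᵥ (-xt) = xt ⬝ᵥ A' *ᵥ xt := by
        rw [mulVec_neg, dotProduct_neg, neg_dotProduct, neg_neg]
      have hn2 : (-xt) ⬝ᵥ C'' *ᵥ b = -(xt ⬝ᵥ C'' *ᵥ b) := neg_dotProduct _ _
      rw [hq, hn2, neg_div, hvalx]
    have h2 : -((ρ - t * g) / Real.sqrt (1 + t ^ 2 * d)) ≤ ρ' := by
      apply le_csSup hbddS
      exact ⟨-xt, b, neg_ne_zero.mpr hxtne, hbne, hvalx'.symm⟩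
    have hsq : ((ρ - t * g) / Real.sqrt (1 + t ^ 2 * d)) ^ 2 ≤ ρ' ^ 2 :=
      sq_le_sq' (neg_le.mp h2) h1
    calc (ρ - t * g) ^ 2 / (1 + t ^ 2 * d)
        = ((ρ - t * g) / Real.sqrt (1 + t ^ 2 * d)) ^ 2 := by
          rw [div_pow, Real.sq_sqrt hD.le]
      _ ≤ ρ' ^ 2 := hsq
  rcases eq_or_ne g 0 with hg0 | hg0
  · rw [hg0]
    have h := key 0
    norm_num at h ⊢
    exact h
  · rcases eq_or_ne ρ 0 with hρ0 | hρ0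
    · have hk : ∀ t : ℝ, t ^ 2 * g ^ 2 / (1 + t ^ 2 * d) ≤ ρ' ^ 2 := by
        intro t
        have := key t
        rw [hρ0, zero_sub, neg_sq, mul_pow] at this
        exact this
      have T0 : Filter.Tendsto (fun t : ℝ => g ^ 2 / (t⁻¹ ^ 2 + d)) Filter.atTop
          (nhds (g ^ 2 / (0 ^ 2 + d))) := by
        apply Filter.Tendsto.div tendsto_const_nhds
        · exact (tendsto_inv_atTop_zero.pow 2).add_const d
        · positivity
      have T : Filter.Tendsto (fun t : ℝ => t ^ 2 * g ^ 2 / (1 + t ^ 2 * d)) Filter.atTop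
          (nhds (g ^ 2 / d)) := by
        have heq : (fun t : ℝ => g ^ 2 / (t⁻¹ ^ 2 + d)) =ᶠ[Filter.atTop]
            (fun t : ℝ => t ^ 2 * g ^ 2 / (1 + t ^ 2 * d)) := by
          filter_upwards [Filter.eventually_ge_atTop (1:ℝ)] with t ht
          have ht0 : t ≠ 0 := by linarith
          field_simp
        have : g ^ 2 / (0 ^ 2 + d) = g ^ 2 / d := by norm_num
        rw [← this]
        exact T0.congr' heq
      have hfin : g ^ 2 / d ≤ ρ' ^ 2 := le_of_tendsto T (Filter.Eventually.of_forall hk)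
      rw [hρ0]
      simpa using hfin
    · set t₀ : ℝ := -g / (d * ρ) with ht₀
      have hiden : (ρ - t₀ * g) ^ 2 / (1 + t₀ ^ 2 * d) = ρ ^ 2 + g ^ 2 / d := by
        rw [ht₀]
        have hD : (0:ℝ) < 1 + (-g / (d * ρ)) ^ 2 * d := by positivity
        field_simp
        ring
      have := key t₀
      rw [hiden] at this
      exact this
end
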